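/- Suppose 1 ≤ p < ∞. Let X ⊆ ℓ_p be a closed linear subspace with dim X = ∞, let n, N ∈ ℕ, ε > 0 and 0 < δ < 1. Then there exist m ∈ ℕ and u ∈ X with u(1) = … = u(n) = 0 such that, setting v := P_m(u) and w := R_m(u): (1) ‖u‖_p = 1; (2) m > 2n and m ≥ N; (3) supp v ⊆ {n+1, n+2, …, m}; (4) |v(j)| ≤ ε for all j; (5) 1 − δ ≤ ‖v‖_p ≤ 1; (6) ‖w‖_p ≤ δ. -/

import Mathlib

open scoped ENNReal

/-- The `ℓ_p` (quasi)norm of a sequence, `‖f‖_p = (∑ |f j|^p)^{1/p}`. -/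
noncomputable def lpNorm (p : ℝ) (f : ℕ → ℝ) : ℝ :=
  (∑' j : ℕ, |f j| ^ p) ^ (1 / p)

/-- `P_m f` keeps the first `m` coordinates of `f` and sets the rest to zero. -/
def Pproj (m : ℕ) (f : ℕ → ℝ) : ℕ → ℝ := fun j => if j < m then f j else 0

/-- `R_m f` sets the first `m` coordinates of `f` to zero (the tail of `f`). -/
def Rproj (m : ℕ) (f : ℕ → ℝ) : ℕ → ℝ := fun j => if j < m then 0 else f j

section Aux

variable {p : ℝ}

lemma toReal_ofReal_p (hp : 1 ≤ p) : (ENNReal.ofReal p).toReal = p :=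
  ENNReal.toReal_ofReal (by linarith)

lemma toReal_ofReal_pos (hp : 1 ≤ p) : 0 < (ENNReal.ofReal p).toReal := by
  rw [toReal_ofReal_p hp]; linarith

lemma le_of_rpow_le_rpow (hp0 : 0 < p) {a b : ℝ} (ha : 0 ≤ a) (hb : 0 ≤ b)
    (h : a ^ p ≤ b ^ p) : a ≤ b := by
  by_contra hab
  push_neg at hab
  exact absurd h (not_le.mpr (Real.rpow_lt_rpow hb hab hp0))

lemma memℓp_of_abs_le (hp : 1 ≤ p) {f : ℕ → ℝ} (hf : Memℓp f (ENNReal.ofReal p))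
    {g : ℕ → ℝ} (h : ∀ j, |g j| ≤ |f j|) : Memℓp g (ENNReal.ofReal p) := by
  apply memℓp_gen
  refine Summable.of_nonneg_of_le (fun j => Real.rpow_nonneg (norm_nonneg _) _)
    (fun j => Real.rpow_le_rpow (norm_nonneg _) ?_ (toReal_ofReal_pos hp).le)
    (hf.summable (toReal_ofReal_pos hp))
  simpa [Real.norm_eq_abs] using h j

noncomputable def headLp (hp : 1 ≤ p) (m : ℕ)
    (f : lp (fun _ : ℕ => ℝ) (ENNReal.ofReal p)) : lp (fun _ : ℕ => ℝ) (ENNReal.ofReal p) :=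
  ⟨Pproj m f, memℓp_of_abs_le hp (lp.memℓp f) (fun j => by
    simp only [Pproj]; split <;> simp)⟩


noncomputable def tailLp (hp : 1 ≤ p) (m : ℕ)
    (f : lp (fun _ : ℕ => ℝ) (ENNReal.ofReal p)) : lp (fun _ : ℕ => ℝ) (ENNReal.ofReal p) :=
  ⟨Rproj m f, memℓp_of_abs_le hp (lp.memℓp f) (fun j => by
    simp only [Rproj]; split <;> simp)⟩

@[simp] lemma headLp_apply (hp : 1 ≤ p) (m : ℕ) (f : lp (fun _ : ℕ => ℝ) (ENNReal.ofReal p))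
    (j : ℕ) : (headLp hp m f : ℕ → ℝ) j = Pproj m (⇑f) j := rfl

@[simp] lemma tailLp_apply (hp : 1 ≤ p) (m : ℕ) (f : lp (fun _ : ℕ => ℝ) (ENNReal.ofReal p))
    (j : ℕ) : (tailLp hp m f : ℕ → ℝ) j = Rproj m (⇑f) j := rfl

lemma headLp_add_tailLp (hp : 1 ≤ p) (m : ℕ) (f : lp (fun _ : ℕ => ℝ) (ENNReal.ofReal p)) :
    headLp hp m f + tailLp hp m f = f := by
  apply lp.ext
  rw [lp.coeFn_add]
  funext j
  by_cases h : j < m <;> simp [Pproj, Rproj, h]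

lemma norm_rpow_add_disjoint (hp : 1 ≤ p)
    (f g : lp (fun _ : ℕ => ℝ) (ENNReal.ofReal p))
    (h : ∀ j, (f : ℕ → ℝ) j = 0 ∨ (g : ℕ → ℝ) j = 0) :
    ‖f + g‖ ^ p = ‖f‖ ^ p + ‖g‖ ^ p := by
  have hq := toReal_ofReal_pos hp
  have hp0 : p ≠ 0 := by linarith
  have h1 := lp.norm_rpow_eq_tsum hq (f + g)
  have h2 := lp.norm_rpow_eq_tsum hq f
  have h3 := lp.norm_rpow_eq_tsum hq g
  rw [toReal_ofReal_p hp] at h1 h2 h3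
  have sf : Summable (fun j => ‖(f : ℕ → ℝ) j‖ ^ p) := by
    have := (lp.memℓp f).summable hq; rwa [toReal_ofReal_p hp] at this
  have sg : Summable (fun j => ‖(g : ℕ → ℝ) j‖ ^ p) := by
    have := (lp.memℓp g).summable hq; rwa [toReal_ofReal_p hp] at this
  rw [h1, h2, h3, ← Summable.tsum_add sf sg]
  refine tsum_congr fun j => ?_
  have hfg : (⇑(f + g)) j = (f : ℕ → ℝ) j + (g : ℕ → ℝ) j := by rw [lp.coeFn_add]; rfl
  rw [hfg]
  rcases h j with h0 | h0 <;> simp [h0, Real.zero_rpow hp0]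

lemma tail_norm_rpow (hp : 1 ≤ p) (m : ℕ) (f : lp (fun _ : ℕ => ℝ) (ENNReal.ofReal p)) :
    ‖tailLp hp m f‖ ^ p = ∑' j : ℕ, ‖(f : ℕ → ℝ) (j + m)‖ ^ p := by
  have hq := toReal_ofReal_pos hp
  have h1 := lp.norm_rpow_eq_tsum hq (tailLp hp m f)
  rw [toReal_ofReal_p hp] at h1
  have hs : Summable (fun j => ‖(tailLp hp m f : ℕ → ℝ) j‖ ^ p) := by
    have := (lp.memℓp (tailLp hp m f)).summable hq; rwa [toReal_ofReal_p hp] at this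
  rw [h1, ← Summable.sum_add_tsum_nat_add m hs]
  have hz : ∑ j ∈ Finset.range m, ‖(tailLp hp m f : ℕ → ℝ) j‖ ^ p = 0 := by
    apply Finset.sum_eq_zero
    intro j hj
    have : j < m := Finset.mem_range.mp hj
    simp [Rproj, this, Real.zero_rpow (by linarith : p ≠ 0)]
  rw [hz, zero_add]
  refine tsum_congr fun j => ?_
  have : ¬ (j + m < m) := by omega
  simp [Rproj, this]

lemma exists_tail_small (hp : 1 ≤ p) (f : lp (fun _ : ℕ => ℝ) (ENNReal.ofReal p))
    (M : ℕ) {η : ℝ} (hη : 0 < η) :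
    ∃ m : ℕ, M ≤ m ∧ ‖tailLp hp m f‖ ≤ η := by
  have hq := toReal_ofReal_pos hp
  have hp0 : 0 < p := by linarith
  have ht := tendsto_sum_nat_add (fun j => ‖(f : ℕ → ℝ) j‖ ^ p)
  have hev : ∀ᶠ m in Filter.atTop, (∑' j : ℕ, ‖(f : ℕ → ℝ) (j + m)‖ ^ p) < η ^ p :=
    ht.eventually_lt_const (by positivity)
  obtain ⟨m, hm1, hm2⟩ := (hev.and (Filter.eventually_ge_atTop M)).exists
  refine ⟨m, hm2, ?_⟩
  refine le_of_rpow_le_rpow hp0 (lp.norm_nonneg' _) hη.le ?_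
  rw [tail_norm_rpow hp m f]
  exact hm1.le

lemma exists_unit_vanishing (hp : 1 ≤ p) [Fact (1 ≤ ENNReal.ofReal p)]
    (X : Submodule ℝ (lp (fun _ : ℕ => ℝ) (ENNReal.ofReal p)))
    (hXinf : ¬ FiniteDimensional ℝ X) (k : ℕ) :
    ∃ u : lp (fun _ : ℕ => ℝ) (ENNReal.ofReal p),
      u ∈ X ∧ ‖u‖ = 1 ∧ ∀ j < k, (u : ℕ → ℝ) j = 0 := by
  let φ : X →ₗ[ℝ] (Fin k → ℝ) :=
    { toFun := fun x => fun j => ((x : lp (fun _ : ℕ => ℝ) (ENNReal.ofReal p)) : ℕ → ℝ) (j : ℕ)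
      map_add' := fun x y => by
        funext j
        simp [Submodule.coe_add, lp.coeFn_add]
      map_smul' := fun c x => by
        funext j
        simp [Submodule.coe_smul, lp.coeFn_smul] }
  have hker : ∃ x : X, x ≠ 0 ∧ φ x = 0 := by
    by_contra hcon
    push_neg at hcon
    have hinj : Function.Injective φ := by
      rw [← LinearMap.ker_eq_bot, LinearMap.ker_eq_bot']
      intro x hx
      by_contra hx0
      exact (hcon x hx0) hx
    exact hXinf (Module.Finite.of_injective φ hinj)
  obtain ⟨x, hx0, hxφ⟩ := hker
  have hxne : (x : lp (fun _ : ℕ => ℝ) (ENNReal.ofReal p)) ≠ 0 := fun h => hx0 (Subtype.ext h)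
  have hnx : 0 < ‖(x : lp (fun _ : ℕ => ℝ) (ENNReal.ofReal p))‖ := norm_pos_iff.mpr hxne
  refine ⟨‖(x : lp (fun _ : ℕ => ℝ) (ENNReal.ofReal p))‖⁻¹ • (x : _), X.smul_mem _ x.2, ?_, ?_⟩
  · rw [norm_smul]
    simp [abs_of_pos hnx, inv_mul_cancel₀ hnx.ne']
  · intro j hj
    have hcoord : ((x : lp (fun _ : ℕ => ℝ) (ENNReal.ofReal p)) : ℕ → ℝ) j = 0 := by
      have := congrFun hxφ ⟨j, hj⟩
      exact this
    rw [lp.coeFn_smul]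
    simp [hcoord]

end Aux

set_option maxHeartbeats 2000000 in
/-- In an infinite-dimensional closed subspace `X ⊆ ℓ_p` one can find, for any
`n, N, ε, δ`, a norm-one element `u` vanishing on the first `n` coordinates
whose head `v = P_m u` is supported in `{n+1, …, m}` (0-indexed: `[n, m)`),
has small coordinates and almost full norm, while the tail `w = R_m u` is small. -/
theorem exists_flat_almost_normalized_element (p : ℝ) (hp : 1 ≤ p)
    [Fact (1 ≤ ENNReal.ofReal p)]
    (X : Submodule ℝ (lp (fun _ : ℕ => ℝ) (ENNReal.ofReal p)))
    (hXclosed : IsClosed (X : Set (lp (fun _ : ℕ => ℝ) (ENNReal.ofReal p))))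
    (hXinf : ¬ FiniteDimensional ℝ X)
    (n N : ℕ) (ε : ℝ) (hε : 0 < ε) (δ : ℝ) (hδ0 : 0 < δ) (hδ1 : δ < 1) :
    ∃ (m : ℕ) (u : lp (fun _ : ℕ => ℝ) (ENNReal.ofReal p)),
      u ∈ X ∧ (∀ j < n, (⇑u : ℕ → ℝ) j = 0) ∧
      ‖u‖ = 1 ∧
      2 * n < m ∧ N ≤ m ∧
      Function.support (Pproj m (⇑u)) ⊆ Set.Ico n m ∧
      (∀ j : ℕ, |Pproj m (⇑u) j| ≤ ε) ∧
      (1 - δ ≤ lpNorm p (Pproj m (⇑u)) ∧ lpNorm p (Pproj m (⇑u)) ≤ 1) ∧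
      lpNorm p (Rproj m (⇑u)) ≤ δ := by
  have hp0 : 0 < p := by linarith
  have hq := toReal_ofReal_pos hp
  have hqne : (ENNReal.ofReal p) ≠ 0 := by
    simp only [ne_eq, ENNReal.ofReal_eq_zero, not_le]; linarith
  -- choice of parameters
  set K : ℕ := max 1 ⌈(4 / ε) ^ p⌉₊ with hKdef
  have hK1 : (1 : ℝ) ≤ (K : ℝ) := by
    have h : 1 ≤ K := le_max_left _ _
    exact_mod_cast h
  have hKge : (4 / ε) ^ p ≤ (K : ℝ) :=
    le_trans (Nat.le_ceil _) (by exact_mod_cast le_max_right 1 ⌈(4 / ε) ^ p⌉₊)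
  have hKr : 4 / ε ≤ (K : ℝ) ^ (1 / p) := by
    have h1 : ((4 / ε) ^ p) ^ (1 / p) ≤ ((K : ℝ)) ^ (1 / p) :=
      Real.rpow_le_rpow (by positivity) hKge (by positivity)
    have hpp : p * (1 / p) = 1 := by field_simp
    rwa [← Real.rpow_mul (by positivity), hpp, Real.rpow_one] at h1
  set η : ℝ := 1 / (4 * K) with hηdef
  have hKpos : (0 : ℝ) < K := by linarith
  have hη0 : 0 < η := by positivity
  have hη1 : η ≤ 1 := by
    rw [hηdef, div_le_one (by positivity)]; linarith
  have hKη : (K : ℝ) * η = 1 / 4 := by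
    rw [hηdef]; field_simp
  have hη4 : η ≤ 1 / 4 := by
    rw [hηdef, div_le_div_iff₀ (by positivity) (by norm_num)]; linarith
  -- the gliding-hump induction
  have main : ∀ K' : ℕ, ∃ (M : ℕ) (s t : lp (fun _ : ℕ => ℝ) (ENNReal.ofReal p)),
      n ≤ M ∧ s ∈ X ∧ (∀ j < n, (s : ℕ → ℝ) j = 0) ∧ (∀ j < n, (t : ℕ → ℝ) j = 0) ∧
      (∀ j, M ≤ j → (t : ℕ → ℝ) j = 0) ∧ (∀ j, |(t : ℕ → ℝ) j| ≤ 1) ∧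
      ‖s - t‖ ≤ (K' : ℝ) * η ∧ (K' : ℝ) * (1 - η) ^ p ≤ ‖t‖ ^ p := by
    intro K'
    induction K' with
    | zero =>
      refine ⟨n, 0, 0, le_refl n, X.zero_mem, by simp, by simp, by simp, by simp, by simp, ?_⟩
      simp [Real.zero_rpow (by linarith : p ≠ 0)]
    | succ K' ih =>
      obtain ⟨M, s, t, hnM, hsX, hs0, ht0, htM, htb, hst, htn⟩ := ih
      obtain ⟨u', hu'X, hu'n, hu'0⟩ := exists_unit_vanishing hp X hXinf M
      obtain ⟨m', hm'M, hm'tail⟩ := exists_tail_small hp u' (M + 1) hη0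
      have hMm' : M < m' := by omega
      have hsplit : headLp hp m' u' + tailLp hp m' u' = u' := headLp_add_tailLp hp m' u'
      have hdiff : u' - headLp hp m' u' = tailLp hp m' u' := by
        rw [sub_eq_iff_eq_add']; exact hsplit.symm
      have htail_le : ‖u' - headLp hp m' u'‖ ≤ η := by rw [hdiff]; exact hm'tail
      have hh'norm : 1 - η ≤ ‖headLp hp m' u'‖ := by
        have h1 := norm_sub_norm_le u' (headLp hp m' u')
        rw [hu'n] at h1
        linarith
      refine ⟨m', s + u', t + headLp hp m' u', by omega, X.add_mem hsX hu'X, ?_, ?_, ?_, ?_, ?_, ?_⟩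
      · intro j hj
        rw [lp.coeFn_add, Pi.add_apply, hs0 j hj, hu'0 j (by omega), add_zero]
      · intro j hj
        rw [lp.coeFn_add, Pi.add_apply, ht0 j hj, headLp_apply]
        simp [Pproj, hu'0 j (by omega)]
      · intro j hj
        rw [lp.coeFn_add, Pi.add_apply, htM j (by omega), headLp_apply]
        simp [Pproj, Nat.not_lt.mpr hj]
      · intro j
        rw [lp.coeFn_add, Pi.add_apply, headLp_apply]
        by_cases hj : j < M
        · rw [Pproj]
          simp only [if_pos (by omega : j < m'), hu'0 j hj, add_zero]
          exact htb j
        · rw [htM j (Nat.le_of_not_lt hj), zero_add]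
          have h2 := lp.norm_apply_le_norm hqne u' j
          rw [hu'n] at h2
          rw [Pproj]
          split
          · simpa [Real.norm_eq_abs] using h2
          · simp
      · have heq : (s + u') - (t + headLp hp m' u') = (s - t) + (u' - headLp hp m' u') := by
          abel
        rw [heq]
        calc ‖(s - t) + (u' - headLp hp m' u')‖ ≤ ‖s - t‖ + ‖u' - headLp hp m' u'‖ :=
              norm_add_le _ _
          _ ≤ (K' : ℝ) * η + η := add_le_add hst htail_le
          _ = ((K' + 1 : ℕ) : ℝ) * η := by push_cast; ring
      · have hdisj : ∀ j, (t : ℕ → ℝ) j = 0 ∨ (headLp hp m' u' : ℕ → ℝ) j = 0 := by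
          intro j
          by_cases hj : j < M
          · right
            rw [headLp_apply, Pproj]
            simp [if_pos (by omega : j < m'), hu'0 j hj]
          · left; exact htM j (Nat.le_of_not_lt hj)
        rw [norm_rpow_add_disjoint hp t _ hdisj]
        have h2 : (1 - η) ^ p ≤ ‖headLp hp m' u'‖ ^ p :=
          Real.rpow_le_rpow (by linarith) hh'norm (by linarith)
        push_cast
        linarith
  obtain ⟨M, s, t, hnM, hsX, hs0, ht0, htM, htb, hst, htn⟩ := main K
  -- norm estimates for s
  have htlow : (K : ℝ) ^ (1 / p) * (1 - η) ≤ ‖t‖ := by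
    refine le_of_rpow_le_rpow hp0
      (mul_nonneg (Real.rpow_nonneg hKpos.le _) (by linarith)) (norm_nonneg t) ?_
    have h3 : ((K : ℝ) ^ (1 / p) * (1 - η)) ^ p = (K : ℝ) * (1 - η) ^ p := by
      rw [Real.mul_rpow (Real.rpow_nonneg hKpos.le _) (by linarith), one_div,
        Real.rpow_inv_rpow hKpos.le (by linarith)]
    rw [h3]
    exact htn
  have hKg1 : (1 : ℝ) ≤ (K : ℝ) ^ (1 / p) := by
    have h := Real.rpow_le_rpow zero_le_one hK1 (by positivity : (0:ℝ) ≤ 1 / p)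
    rwa [Real.one_rpow] at h
  have hKle : (K : ℝ) ^ (1 / p) ≤ (K : ℝ) := by
    have hle : 1 / p ≤ 1 := by
      rw [div_le_one hp0]; exact hp
    have h := Real.rpow_le_rpow_of_exponent_le hK1 hle
    rwa [Real.rpow_one] at h
  have hKη' : (K : ℝ) ^ (1 / p) * η ≤ 1 / 4 := by
    calc (K : ℝ) ^ (1 / p) * η ≤ (K : ℝ) * η := mul_le_mul_of_nonneg_right hKle hη0.le
      _ = 1 / 4 := hKη
  have h1 : ‖t‖ ≤ ‖s‖ + ‖s - t‖ := by
    calc ‖t‖ = ‖s - (s - t)‖ := by rw [sub_sub_cancel]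
      _ ≤ ‖s‖ + ‖s - t‖ := norm_sub_le _ _
  have hsnorm : (K : ℝ) ^ (1 / p) / 2 ≤ ‖s‖ := by
    nlinarith [h1, hst, htlow, hKg1, hKη, hKη']
  have hεs : 2 / ε ≤ ‖s‖ := by
    have h2 : (2 : ℝ) / ε = (4 / ε) / 2 := by ring
    linarith
  have hspos : 0 < ‖s‖ := by
    have : (0 : ℝ) < 2 / ε := by positivity
    linarith
  set u : lp (fun _ : ℕ => ℝ) (ENNReal.ofReal p) := ‖s‖⁻¹ • s with hu
  have hu_mem : u ∈ X := X.smul_mem _ hsX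
  have hu_norm : ‖u‖ = 1 := by
    rw [hu, norm_smul]
    simp [Real.norm_eq_abs, abs_of_pos hspos, inv_mul_cancel₀ hspos.ne']
  have hu_apply : ∀ j, (u : ℕ → ℝ) j = ‖s‖⁻¹ * (s : ℕ → ℝ) j := by
    intro j
    rw [hu, lp.coeFn_smul]
    rfl
  have hu_zero : ∀ j < n, (u : ℕ → ℝ) j = 0 := by
    intro j hj
    rw [hu_apply, hs0 j hj, mul_zero]
  have hsj : ∀ j, |(s : ℕ → ℝ) j| ≤ 5 / 4 := by
    intro j
    have h2 : |(s : ℕ → ℝ) j - (t : ℕ → ℝ) j| ≤ ‖s - t‖ := by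
      have h3 := lp.norm_apply_le_norm hqne (s - t) j
      rw [lp.coeFn_sub] at h3
      simpa [Real.norm_eq_abs] using h3
    have h4 : ‖s - t‖ ≤ 1 / 4 := by rw [hKη] at hst; exact hst
    have h5 := abs_add_le ((t : ℕ → ℝ) j) ((s : ℕ → ℝ) j - (t : ℕ → ℝ) j)
    have h6 : (t : ℕ → ℝ) j + ((s : ℕ → ℝ) j - (t : ℕ → ℝ) j) = (s : ℕ → ℝ) j := by ring
    rw [h6] at h5
    have h7 := htb j
    linarith
  have hu_coord : ∀ j, |(u : ℕ → ℝ) j| ≤ ε := by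
    intro j
    rw [hu_apply, abs_mul, abs_inv, abs_of_pos hspos]
    have hinv : ‖s‖⁻¹ ≤ ε / 2 := by
      have h2 : ‖s‖⁻¹ ≤ (2 / ε)⁻¹ := by
        apply inv_anti₀ (by positivity) hεs
      rwa [inv_div] at h2
    calc ‖s‖⁻¹ * |(s : ℕ → ℝ) j| ≤ (ε / 2) * (5 / 4) :=
          mul_le_mul hinv (hsj j) (abs_nonneg _) (by positivity)
      _ ≤ ε := by linarith
  -- final choice of m
  obtain ⟨m, hmge, hmtail⟩ := exists_tail_small hp u (max N (2 * n + 1)) hδ0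
  have hmN : N ≤ m := le_trans (le_max_left _ _) hmge
  have hm2n : 2 * n < m := by
    have := le_trans (le_max_right _ _) hmge
    omega
  have hdisj : ∀ j, (headLp hp m u : ℕ → ℝ) j = 0 ∨ (tailLp hp m u : ℕ → ℝ) j = 0 := by
    intro j
    by_cases hj : j < m
    · right; simp [Rproj, hj]
    · left; simp [Pproj, hj]
  have hsum : ‖headLp hp m u‖ ^ p + ‖tailLp hp m u‖ ^ p = 1 := by
    have h2 := norm_rpow_add_disjoint hp (headLp hp m u) (tailLp hp m u) hdisj
    rw [headLp_add_tailLp hp m u, hu_norm, Real.one_rpow] at h2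
    linarith
  have hhead_eq : lpNorm p (Pproj m (⇑u)) = ‖headLp hp m u‖ := by
    have h2 := lp.norm_eq_tsum_rpow hq (headLp hp m u)
    rw [toReal_ofReal_p hp] at h2
    rw [h2]
    unfold lpNorm
    congr 1
  have htail_eq : lpNorm p (Rproj m (⇑u)) = ‖tailLp hp m u‖ := by
    have h2 := lp.norm_eq_tsum_rpow hq (tailLp hp m u)
    rw [toReal_ofReal_p hp] at h2
    rw [h2]
    unfold lpNorm
    congr 1
  have htailp : ‖tailLp hp m u‖ ^ p ≤ δ ^ p :=
    Real.rpow_le_rpow (norm_nonneg _) hmtail hp0.le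
  have hδp : δ ^ p ≤ δ := by
    have h2 := Real.rpow_le_rpow_of_exponent_ge hδ0 hδ1.le hp
    rwa [Real.rpow_one] at h2
  have h1δp : (1 - δ) ^ p ≤ 1 - δ := by
    have h2 := Real.rpow_le_rpow_of_exponent_ge (by linarith : (0:ℝ) < 1 - δ) (by linarith) hp
    rwa [Real.rpow_one] at h2
  have hhead_ub : ‖headLp hp m u‖ ≤ 1 := by
    refine le_of_rpow_le_rpow hp0 (norm_nonneg _) zero_le_one ?_
    rw [Real.one_rpow]
    have h2 : 0 ≤ ‖tailLp hp m u‖ ^ p := Real.rpow_nonneg (norm_nonneg _) _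
    linarith
  have hhead_lb : 1 - δ ≤ ‖headLp hp m u‖ := by
    refine le_of_rpow_le_rpow hp0 (by linarith) (norm_nonneg _) ?_
    linarith
  refine ⟨m, u, hu_mem, hu_zero, hu_norm, hm2n, hmN, ?_, ?_, ⟨?_, ?_⟩, ?_⟩
  · intro j hj
    rw [Set.mem_Ico]
    simp only [Function.mem_support] at hj
    constructor
    · by_contra hn'
      push_neg at hn'
      exact hj (by simp [Pproj, hu_zero j hn'])
    · by_contra hm'
      push_neg at hm'
      exact hj (by simp [Pproj, Nat.not_lt.mpr hm'])
  · intro j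
    by_cases hj : j < m
    · simpa [Pproj, hj] using hu_coord j
    · simp [Pproj, hj, hε.le]
  · rw [hhead_eq]; exact hhead_lb
  · rw [hhead_eq]; exact hhead_ub
  · rw [htail_eq]; exact hmtail
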